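/- (Forward-shift inner product identity.) Let δ_j : Fin N → ℝ^{n_δ} be a sequence, let T := {τ ∈ {1,…,N−1} : δ_j(τ) ≠ δ_j(τ−1)} be its set of mode transition indices, and let s' ≥ 1. Assume any two distinct transitions in T are separated by more than s' steps and every τ ∈ T satisfies τ ≥ s'. Let δ be the forward shift of δ_j by s' steps: δ(i) = δ_j(i + s') for i ≤ N − 1 − s' and δ(i) = δ_j(N−1) for i > N − 1 − s'. Then for any vectors ψ[0],…,ψ[N−1] ∈ ℝ^{n_δ}: Σ_{k=0}^{N−1} (δ(k) − δ_j(k))ᵀ ψ[k] = Σ_{τ ∈ T} Σ_{k=τ−s'}^{τ−1} (δ_j(τ) − δ_j(τ−1))ᵀ ψ[k]. -/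

import Mathlib

open Matrix

/-- Forward temporal shift of a sequence by `s'` steps: `δ_s(i) = δ(i + s')` for
`i + s' ≤ N - 1`, padding the vacated final positions with the boundary value
`δ(N-1)`. -/
def fwdShift {N : ℕ} {V : Type*} (s' : ℕ) (δ : Fin N → V) : Fin N → V := fun i =>
  if h : (i : ℕ) + s' < N then δ ⟨(i : ℕ) + s', h⟩
  else δ ⟨N - 1, Nat.sub_lt i.pos Nat.one_pos⟩

/-- Forward-shift inner product identity: if the mode transitions
of `δj` are pairwise separated by more than `s'` steps and each transition `τ`
satisfies `τ ≥ s'`, then for the forward shift `δ` of `δj` by `s'` steps and any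
vectors `ψ[0], …, ψ[N−1]`:
`Σ_{k=0}^{N−1} (δ(k) − δj(k))ᵀψ[k]
  = Σ_{τ ∈ T} Σ_{k=τ−s'}^{τ−1} (δj(τ) − δj(τ−1))ᵀψ[k]`. -/
theorem forward_shift_inner_product_identity {N nδ : ℕ}
    (δj δ : Fin N → Fin nδ → ℝ) (s' : ℕ) (hs' : 1 ≤ s')
    (T : Finset (Fin N))
    (hT : T = Finset.univ.filter (fun τ : Fin N => 0 < (τ : ℕ) ∧
      δj τ ≠ δj ⟨(τ : ℕ) - 1, lt_of_le_of_lt (Nat.sub_le _ _) τ.isLt⟩))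
    (hsep : ∀ τ ∈ T, ∀ τ' ∈ T, (τ : ℕ) < (τ' : ℕ) → (τ : ℕ) + s' < (τ' : ℕ))
    (hbound : ∀ τ ∈ T, s' ≤ (τ : ℕ))
    (hδ : δ = fwdShift s' δj)
    (ψ : ℕ → Fin nδ → ℝ) :
    ∑ k : Fin N, (δ k - δj k) ⬝ᵥ ψ (k : ℕ) =
      ∑ τ ∈ T, ∑ k ∈ Finset.Ico ((τ : ℕ) - s') (τ : ℕ),
        (δj τ - δj ⟨(τ : ℕ) - 1, lt_of_le_of_lt (Nat.sub_le _ _) τ.isLt⟩) ⬝ᵥ ψ k := by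
  subst hT hδ
  rcases Nat.eq_zero_or_pos N with hN | hN
  · subst hN; simp
  set g : ℕ → Fin nδ → ℝ := fun n => δj ⟨min n (N-1), by omega⟩ with hgdef
  have hglt : ∀ (n : ℕ) (h : n < N), g n = δj ⟨n, h⟩ := by
    intro n h
    have hm : min n (N-1) = n := by omega
    simp only [hgdef, hm]
  have hgN : ∀ n, N ≤ n → g n = g (n-1) := by
    intro n hn
    have h1 : min n (N-1) = N-1 := by omega
    have h2 : min (n-1) (N-1) = N-1 := by omega
    simp only [hgdef, h1, h2]
  have tele : ∀ (a m : ℕ), ∑ n ∈ Finset.Ioc a (a+m), (g n - g (n-1)) = g (a+m) - g a := by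
    intro a m
    induction m with
    | zero => simp
    | succ m ih =>
      rw [← Nat.add_assoc, Finset.sum_Ioc_succ_top (by omega), ih]
      have h : a + m + 1 - 1 = a + m := rfl
      rw [h]; abel
  have hkey : ∀ k : Fin N, (fwdShift s' δj k - δj k) = ∑ n ∈ Finset.Ioc (k:ℕ) ((k:ℕ) + s'), (g n - g (n-1)) := by
    intro k
    rw [tele (k:ℕ) s']
    have h1 : δj k = g (k:ℕ) := by rw [hglt (k:ℕ) k.isLt]
    have h2 : fwdShift s' δj k = g ((k:ℕ) + s') := by
      rcases lt_or_ge ((k:ℕ)+s') N with h | h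
      · rw [hglt _ h]; simp [fwdShift, h]
      · have hm : min ((k:ℕ)+s') (N-1) = N-1 := by omega
        simp only [fwdShift, dif_neg (Nat.not_lt.mpr h), hgdef, hm]
    rw [h1, h2]
  have hmemT : ∀ (n : ℕ) (h : n < N), ((⟨n, h⟩ : Fin N) ∈ Finset.univ.filter (fun τ : Fin N => 0 < (τ : ℕ) ∧
      δj τ ≠ δj ⟨(τ : ℕ) - 1, lt_of_le_of_lt (Nat.sub_le _ _) τ.isLt⟩)) ↔ g n ≠ g (n-1) := by
    intro n h
    simp only [Finset.mem_filter, Finset.mem_univ, true_and]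
    rw [hglt n h, hglt (n-1) (by omega)]
    constructor
    · rintro ⟨-, hne⟩; exact hne
    · intro hne
      refine ⟨?_, hne⟩
      rcases Nat.eq_zero_or_pos n with rfl | hp
      · exact absurd rfl hne
      · exact hp
  have sumdp : ∀ (s : Finset ℕ) (v : ℕ → Fin nδ → ℝ) (w : Fin nδ → ℝ),
      (∑ n ∈ s, v n) ⬝ᵥ w = ∑ n ∈ s, v n ⬝ᵥ w := by
    intro s v w
    induction s using Finset.cons_induction with
    | empty => simp
    | cons a s ha ih => rw [Finset.sum_cons, Finset.sum_cons, add_dotProduct, ih]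
  calc ∑ k : Fin N, (fwdShift s' δj k - δj k) ⬝ᵥ ψ (k:ℕ)
      = ∑ k ∈ Finset.range N, ∑ n ∈ (Finset.Ioc k (k+s')).filter (fun n => g n ≠ g (n-1)), (g n - g (n-1)) ⬝ᵥ ψ k := by
        rw [← Fin.sum_univ_eq_sum_range (fun k => ∑ n ∈ (Finset.Ioc k (k+s')).filter (fun n => g n ≠ g (n-1)), (g n - g (n-1)) ⬝ᵥ ψ k) N]
        refine Finset.sum_congr rfl fun k _ => ?_
        rw [hkey k, sumdp]
        rw [Finset.sum_filter_of_ne]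
        intro n hn hne hgg
        exact hne (by rw [hgg]; simp)
    _ = ∑ n ∈ (Finset.range N).filter (fun n => g n ≠ g (n-1)), ∑ k ∈ Finset.Ico (n - s') n, (g n - g (n-1)) ⬝ᵥ ψ k := by
        apply Finset.sum_comm'
        intro k n
        simp only [Finset.mem_range, Finset.mem_filter, Finset.mem_Ioc, Finset.mem_Ico]
        constructor
        · rintro ⟨hk, ⟨hkn, hns⟩, hne⟩
          have hnN : n < N := by
            by_contra hge
            exact hne (hgN n (by omega))
          exact ⟨⟨by omega, hkn⟩, hnN, hne⟩
        · rintro ⟨⟨hks, hkn⟩, hnN, hne⟩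
          have hs : s' ≤ n := hbound ⟨n, hnN⟩ ((hmemT n hnN).mpr hne)
          exact ⟨by omega, ⟨hkn, by omega⟩, hne⟩
    _ = ∑ τ ∈ Finset.univ.filter (fun τ : Fin N => 0 < (τ : ℕ) ∧
          δj τ ≠ δj ⟨(τ : ℕ) - 1, lt_of_le_of_lt (Nat.sub_le _ _) τ.isLt⟩),
        ∑ k ∈ Finset.Ico ((τ : ℕ) - s') (τ : ℕ),
          (δj τ - δj ⟨(τ : ℕ) - 1, lt_of_le_of_lt (Nat.sub_le _ _) τ.isLt⟩) ⬝ᵥ ψ k := by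
        refine Finset.sum_bij' (fun n hn => (⟨n, Finset.mem_range.mp (Finset.mem_filter.mp hn).1⟩ : Fin N))
          (fun τ _ => (τ:ℕ)) ?_ ?_ ?_ ?_ ?_
        · intro n hn
          exact (hmemT n _).mpr (Finset.mem_filter.mp hn).2
        · intro τ hτ
          refine Finset.mem_filter.mpr ⟨Finset.mem_range.mpr τ.isLt, ?_⟩
          exact (hmemT (τ:ℕ) τ.isLt).mp (by simpa using hτ)
        · intro n hn; rfl
        · intro τ hτ; rfl
        · intro n hn
          have hnN : n < N := Finset.mem_range.mp (Finset.mem_filter.mp hn).1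
          show ∑ k ∈ Finset.Ico (n - s') n, (g n - g (n-1)) ⬝ᵥ ψ k = ∑ k ∈ Finset.Ico (n - s') n, (δj ⟨n, hnN⟩ - δj ⟨n-1, by omega⟩) ⬝ᵥ ψ k
          rw [hglt n hnN, hglt (n-1) (by omega)]
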